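/- The field of fractions of C has transcendence degree one over k; in fact x_0 is a transcendence basis. -/

import Mathlib

open scoped symmDiff

noncomputable section

/-- The ring `C = k[x_n : n ∈ ℤ] / (x_n² + n = x_m² + m)`. -/
abbrev WeylC (k : Type) [Field k] : Type :=
  MvPolynomial ℤ k ⧸ Ideal.span { p : MvPolynomial ℤ k |
    ∃ m n : ℤ, p = MvPolynomial.X n ^ 2 + (n : MvPolynomial ℤ k)
      - MvPolynomial.X m ^ 2 - (m : MvPolynomial ℤ k) }

variable (k : Type) [Field k]

/-- The generator `x_n` of `C`. -/
def xC (n : ℤ) : WeylC k := Ideal.Quotient.mk _ (MvPolynomial.X n)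

/-- `x_I := ∏_{i ∈ I} x_i` for a finite subset `I ⊆ ℤ` (with `x_∅ = 1`). -/
def xS (I : Finset ℤ) : WeylC k := ∏ i ∈ I, xC k i

/-- The identity component `C_∅ = k[x_0²]`. -/
def Cphi : Subalgebra k (WeylC k) := Algebra.adjoin k {xC k 0 ^ 2}

/-- The homogeneous component `C_I = C_∅ · x_I` of the `ℤ_fin`-grading on `C`. -/
def Cgrade (I : Finset ℤ) : Submodule k (WeylC k) :=
  (Cphi k).toSubmodule.map (LinearMap.mulRight k (xS k I))

/-! ### Auxiliary constructions -/

/-- A big algebraically closed field receiving `C`. -/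
abbrev WeylL : Type := AlgebraicClosure (RatFunc k)

/-- The transcendental element `t`. -/
def tL : WeylL k := algebraMap (RatFunc k) (WeylL k) RatFunc.X

/-- A chosen square root of `t - n`. -/
def yL (n : ℤ) : WeylL k :=
  Classical.choose (IsAlgClosed.exists_pow_nat_eq (tL k - n) two_pos)

lemma yL_sq (n : ℤ) : yL k n ^ 2 = tL k - n :=
  Classical.choose_spec (IsAlgClosed.exists_pow_nat_eq (tL k - n) two_pos)

lemma tL_transcendental : Transcendental k (tL k) := by
  rw [tL, transcendental_algebraMap_iff (algebraMap (RatFunc k) (WeylL k)).injective]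
  have : (RatFunc.X : RatFunc k) = algebraMap (Polynomial k) (RatFunc k) Polynomial.X := rfl
  rw [this, transcendental_algebraMap_iff (IsFractionRing.injective (Polynomial k) (RatFunc k))]
  exact Polynomial.transcendental_X k

lemma yL0_transcendental : Transcendental k (yL k 0) := by
  intro h
  have h2 : IsAlgebraic k (yL k 0 ^ 2) := (h.isIntegral.pow 2).isAlgebraic
  rw [yL_sq] at h2
  simp only [Int.cast_zero, sub_zero] at h2
  exact tL_transcendental k h2

/-- The evaluation map `MvPolynomial ℤ k →ₐ[k] L` sending `X n ↦ y n`. -/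
def psiL : MvPolynomial ℤ k →ₐ[k] WeylL k := MvPolynomial.aeval (yL k)

lemma psiL_vanish : ∀ a ∈ Ideal.span { p : MvPolynomial ℤ k |
    ∃ m n : ℤ, p = MvPolynomial.X n ^ 2 + (n : MvPolynomial ℤ k)
      - MvPolynomial.X m ^ 2 - (m : MvPolynomial ℤ k) }, psiL k a = 0 := by
  intro a ha
  have : Ideal.span { p : MvPolynomial ℤ k |
      ∃ m n : ℤ, p = MvPolynomial.X n ^ 2 + (n : MvPolynomial ℤ k)
        - MvPolynomial.X m ^ 2 - (m : MvPolynomial ℤ k) } ≤ RingHom.ker (psiL k) := by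
    rw [Ideal.span_le]
    rintro p ⟨m, n, rfl⟩
    simp only [SetLike.mem_coe, RingHom.mem_ker, map_sub, map_add, map_pow, map_intCast,
      psiL, MvPolynomial.aeval_X]
    rw [yL_sq, yL_sq]
    ring
  exact this ha

/-- The induced map `C →ₐ[k] L`. -/
def FL : WeylC k →ₐ[k] WeylL k := Ideal.Quotient.liftₐ _ (psiL k) (psiL_vanish k)

lemma FL_xC (n : ℤ) : FL k (xC k n) = yL k n := by
  show psiL k (MvPolynomial.X n) = yL k n
  simp [psiL]

lemma xC0_transcendental : Transcendental k (xC k 0) := by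
  intro h
  exact yL0_transcendental k (by simpa [FL_xC] using h.algHom (FL k))

instance : Nontrivial (WeylC k) := (FL k).toRingHom.domain_nontrivial

/-- The key relation `x_n² = x_0² - n` in `C`. -/
lemma xC_sq (n : ℤ) : xC k n ^ 2 = xC k 0 ^ 2 - n := by
  have hmem : (MvPolynomial.X n ^ 2 + (n : MvPolynomial ℤ k)
      - MvPolynomial.X 0 ^ 2 - ((0 : ℤ) : MvPolynomial ℤ k)) ∈
      Ideal.span { p : MvPolynomial ℤ k |
        ∃ m n : ℤ, p = MvPolynomial.X n ^ 2 + (n : MvPolynomial ℤ k)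
          - MvPolynomial.X m ^ 2 - (m : MvPolynomial ℤ k) } :=
    Ideal.subset_span ⟨0, n, rfl⟩
  have h0 := (Ideal.Quotient.eq_zero_iff_mem).2 hmem
  have : xC k n ^ 2 + (n : WeylC k) - xC k 0 ^ 2 - ((0 : ℤ) : WeylC k) = 0 := by
    simpa [xC, map_sub, map_add, map_pow] using h0
  push_cast at this ⊢
  linear_combination this

lemma isIntegral_xC (n : ℤ) :
    IsIntegral (Algebra.adjoin k {xC k 0}) (xC k n) := by
  set B := Algebra.adjoin k {xC k 0}
  have hb : xC k 0 ^ 2 - (n : WeylC k) ∈ B := by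
    exact sub_mem (pow_mem (Algebra.self_mem_adjoin_singleton k _) 2) (intCast_mem B n)
  refine ⟨Polynomial.X ^ 2 - Polynomial.C ⟨_, hb⟩, Polynomial.monic_X_pow_sub_C _ two_ne_zero, ?_⟩
  simp only [Polynomial.eval₂_sub, Polynomial.eval₂_pow, Polynomial.eval₂_X, Polynomial.eval₂_C]
  rw [xC_sq]
  exact sub_self _

lemma isIntegral_weylC (a : WeylC k) :
    IsIntegral (Algebra.adjoin k {xC k 0}) a := by
  set B := Algebra.adjoin k {xC k 0}
  let S : Subalgebra k (WeylC k) := (integralClosure B (WeylC k)).restrictScalars k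
  have htop : S = ⊤ := by
    rw [eq_top_iff]
    have hadj : Algebra.adjoin k (Set.range (xC k)) = ⊤ := by
      have : Set.range (xC k) =
          (Ideal.Quotient.mkₐ k _) '' (Set.range (MvPolynomial.X : ℤ → MvPolynomial ℤ k)) := by
        rw [← Set.range_comp]; rfl
      rw [this, ← AlgHom.map_adjoin, MvPolynomial.adjoin_range_X, Algebra.map_top,
        AlgHom.range_eq_top]
      exact Ideal.Quotient.mkₐ_surjective k _
    rw [← hadj]
    apply Algebra.adjoin_le
    rintro _ ⟨n, rfl⟩
    exact isIntegral_xC k n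
  have : a ∈ S := htop ▸ Algebra.mem_top
  exact this

variable [CharZero k]

/-- The fraction field of `C` has transcendence degree one over
`k`; in fact `x_0` is a transcendence basis for `C` over `k`. -/
theorem x0_isTranscendenceBasis :
    IsTranscendenceBasis k (fun _ : Unit => xC k 0) := by
  have hx : AlgebraicIndependent k (fun _ : Unit => xC k 0) := by
    have h1 : AlgebraicIndependent k ![xC k 0] :=
      algebraicIndependent_iff_transcendental.mpr (xC0_transcendental k)
    have := h1.comp (fun _ : Unit => (0 : Fin 1)) (fun a b _ => rfl)
    convert this using 1
    rfl
  refine ⟨hx, fun s hs hsub => ?_⟩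
  have hx0s : xC k 0 ∈ s := hsub ⟨(), rfl⟩
  refine le_antisymm hsub ?_
  intro a ha
  by_contra hns
  have hane : a ≠ xC k 0 := by
    rintro rfl
    exact hns ⟨(), rfl⟩
  -- the family (a, x₀) is algebraically independent
  let j : Option Unit → s := fun o => o.elim ⟨a, ha⟩ (fun _ => ⟨xC k 0, hx0s⟩)
  have hjinj : Function.Injective j := by
    rintro (_ | ⟨⟩) (_ | ⟨⟩) h
    · rfl
    · exact absurd (congrArg Subtype.val h) hane
    · exact absurd (congrArg Subtype.val h).symm hane
    · rfl
  have hopt : AlgebraicIndependent k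
      (fun o : Option Unit => o.elim a (fun _ : Unit => xC k 0)) := by
    have := hs.comp j hjinj
    convert this using 1
    funext o
    cases o <;> rfl
  have htr := (hx.option_iff_transcendental a).1 hopt
  have hrange : Set.range (fun _ : Unit => xC k 0) = {xC k 0} := Set.range_const
  rw [hrange] at htr
  exact htr (isIntegral_weylC k a).isAlgebraic

end
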